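/- arXiv:2103.15710 — 3 statements merged into one kernel-verified Lean document; each statement's English description precedes it below -/
import Mathlib

section
/- Uniqueness of solutions for the linear-union traffic system (instance of the paper's Uniqueness Lemma for the differential equations of the model): fix V₀, T, l, L₁, L₂ > 0 and constants f₁, g₂, π ∈ ℝ, and let F(k₁, k₂) = ((f₁ − π·min(d(k₁), s(k₂)))/L₁, (π·min(d(k₁), s(k₂)) − g₂)/L₂). If r ≥ 0 and x, y : [0, r] → ℝ² are two solutions of the ODE z'(t) = F(z(t)) on [0, r] with x(0) = y(0), then x(t) = y(t) for every t ∈ [0, r]; i.e., for each initial state and each duration there is at most one flow of the system. -/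
/-- An affine image of a Lipschitz function is Lipschitz. -/
lemma lip_affine {α : Type*} [PseudoMetricSpace α] (c b : ℝ) {K : NNReal} {f : α → ℝ}
    (hf : LipschitzWith K f) : LipschitzWith (Real.nnabs c * K) (fun x => c * f x + b) := by
  apply LipschitzWith.of_dist_le_mul
  intro p q
  have h1 := hf.dist_le_mul p q
  have h2 : dist (c * f p + b) (c * f q + b) = |c| * dist (f p) (f q) := by
    rw [Real.dist_eq, Real.dist_eq, ← abs_mul]
    ring_nf
  rw [h2]
  have hc : ((Real.nnabs c * K : NNReal) : ℝ) = |c| * (K : ℝ) := by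
    simp [Real.coe_nnabs]
  rw [hc, mul_assoc]
  exact mul_le_mul_of_nonneg_left h1 (abs_nonneg c)


/-- uniqueness of solutions for the linear-union traffic system. Two
solutions of `z' = F(z)` on `[0, r]` with the same initial state agree on `[0, r]`:
for each initial state and each duration there is at most one flow of the system. -/
theorem linear_union_uniqueness
    (V₀ T l L₁ L₂ : ℝ) (hV : 0 < V₀) (hT : 0 < T) (hl : 0 < l)
    (hL₁ : 0 < L₁) (hL₂ : 0 < L₂)
    (f₁ g₂ π : ℝ)
    (ρc : ℝ) (hρc : ρc = 1 / (V₀ * T + l))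
    (Q : ℝ → ℝ)
    (hQ : ∀ ρ, Q ρ = if ρ ≤ ρc then V₀ * ρ else (1 / T) * (1 - ρ * l))
    (d s : ℝ → ℝ)
    (hd : ∀ ρ, d ρ = Q (min ρ ρc))
    (hs : ∀ ρ, s ρ = Q (max ρ ρc))
    (F : ℝ × ℝ → ℝ × ℝ)
    (hF : ∀ k : ℝ × ℝ,
      F k = ((f₁ - π * min (d k.1) (s k.2)) / L₁,
             (π * min (d k.1) (s k.2) - g₂) / L₂))
    (r : ℝ) (hr : 0 ≤ r)
    (x y : ℝ → ℝ × ℝ)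
    (hx : ∀ t ∈ Set.Icc (0 : ℝ) r, HasDerivAt x (F (x t)) t)
    (hy : ∀ t ∈ Set.Icc (0 : ℝ) r, HasDerivAt y (F (y t)) t)
    (h0 : x 0 = y 0) :
    ∀ t ∈ Set.Icc (0 : ℝ) r, x t = y t := by
  have hTl : 0 < V₀ * T + l := by positivity
  have hkey : V₀ * ρc = -(l / T) * ρc + 1 / T := by
    rw [hρc]; field_simp; ring
  have hlT : 0 < l / T := div_pos hl hT
  -- rewrite d and s as min of affine functions
  have hd' : d = fun ρ => V₀ * min ρ ρc + 0 := by
    funext ρ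
    rw [hd ρ, hQ, if_pos (min_le_right ρ ρc), add_zero]
  have hs' : s = fun ρ => min (-(l / T) * ρ + 1 / T) (V₀ * ρc) := by
    funext ρ
    rw [hs ρ, hQ]
    rcases le_total ρ ρc with h | h
    · rw [max_eq_right h, if_pos le_rfl]
      refine (min_eq_right ?_).symm
      nlinarith
    · rw [max_eq_left h]
      split_ifs with h2
      · have : ρ = ρc := le_antisymm h2 h
        subst this
        exact (min_eq_right hkey.le).symm
      · refine Eq.trans (by field_simp; ring) (min_eq_left ?_).symm
        nlinarith
  -- the min term is Lipschitz
  have hm : LipschitzWith ((Real.nnabs V₀ * 1) * 1 ⊔ (Real.nnabs (-(l / T)) * 1) * 1)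
      (fun k : ℝ × ℝ => min (d k.1) (s k.2)) := by
    have hd2 : LipschitzWith (Real.nnabs V₀ * 1)
        (fun ρ : ℝ => V₀ * min ρ ρc + 0) :=
      lip_affine V₀ 0 (LipschitzWith.min_const LipschitzWith.id ρc)
    have hs2 : LipschitzWith (Real.nnabs (-(l / T)) * 1)
        (fun ρ : ℝ => min (-(l / T) * ρ + 1 / T) (V₀ * ρc)) :=
      LipschitzWith.min_const (lip_affine (-(l / T)) (1 / T) LipschitzWith.id) (V₀ * ρc)
    have := ((hd2.comp LipschitzWith.prod_fst).min (hs2.comp LipschitzWith.prod_snd))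
    rw [hd', hs']
    exact this
  -- F is Lipschitz
  set K₁ := (Real.nnabs V₀ * 1) * 1 ⊔ (Real.nnabs (-(l / T)) * 1) * 1 with hK₁
  have hF1 : LipschitzWith (Real.nnabs (-π / L₁) * K₁ ⊔ Real.nnabs (π / L₂) * K₁) F := by
    have h1 : LipschitzWith (Real.nnabs (-π / L₁) * K₁)
        (fun k : ℝ × ℝ => (-π / L₁) * min (d k.1) (s k.2) + f₁ / L₁) :=
      lip_affine _ _ hm
    have h2 : LipschitzWith (Real.nnabs (π / L₂) * K₁)
        (fun k : ℝ × ℝ => (π / L₂) * min (d k.1) (s k.2) + (-g₂ / L₂)) :=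
      lip_affine _ _ hm
    have := h1.prodMk h2
    convert this using 2 with k
    rw [hF k]
    simp only [Prod.mk.injEq]
    constructor <;> ring
  -- apply uniqueness of ODE solutions
  have := ODE_solution_unique (v := fun _ : ℝ => F) (fun _ => hF1)
    (fun t ht => (hx t ht).continuousAt.continuousWithinAt)
    (fun t ht => (hx t (Set.Ico_subset_Icc_self ht)).hasDerivWithinAt)
    (fun t ht => (hy t ht).continuousAt.continuousWithinAt)
    (fun t ht => (hy t (Set.Ico_subset_Icc_self ht)).hasDerivWithinAt)
    h0
  exact fun t ht => this ht
end

section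
/- Nonnegativity of the upstream density is invariant in the linear-union model: fix V₀, T, l, L₁, L₂ > 0, a constant inflow f₁ ≥ 0, a constant outflow g₂ ∈ ℝ, and π ∈ [0, 1]. Suppose k₁, k₂ : [0, r] → ℝ are differentiable and satisfy k₁'(t) = (f₁ − π·min(d(k₁(t)), s(k₂(t))))/L₁ and k₂'(t) = (π·min(d(k₁(t)), s(k₂(t))) − g₂)/L₂ on [0, r], with k₁(0) ≥ 0. Then k₁(t) ≥ 0 for all t ∈ [0, r]. -/
/-- nonnegativity of the upstream density is invariant in the
linear-union model: if `f₁ ≥ 0`, `π ∈ [0,1]` and `k₁(0) ≥ 0`, then `k₁(t) ≥ 0`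
for all `t ∈ [0, r]`. -/
theorem linear_union_density_nonneg_invariant
    (V₀ T l L₁ L₂ : ℝ) (hV : 0 < V₀) (hT : 0 < T) (hl : 0 < l)
    (hL₁ : 0 < L₁) (hL₂ : 0 < L₂)
    (f₁ g₂ π : ℝ) (hf₁ : 0 ≤ f₁) (hπ₀ : 0 ≤ π) (hπ₁ : π ≤ 1)
    (ρc : ℝ) (hρc : ρc = 1 / (V₀ * T + l))
    (Q : ℝ → ℝ)
    (hQ : ∀ ρ, Q ρ = if ρ ≤ ρc then V₀ * ρ else (1 / T) * (1 - ρ * l))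
    (d s : ℝ → ℝ)
    (hd : ∀ ρ, d ρ = Q (min ρ ρc))
    (hs : ∀ ρ, s ρ = Q (max ρ ρc))
    (r : ℝ)
    (k₁ k₂ : ℝ → ℝ)
    (hk₁ : ∀ t ∈ Set.Icc (0 : ℝ) r,
      HasDerivAt k₁ ((f₁ - π * min (d (k₁ t)) (s (k₂ t))) / L₁) t)
    (hk₂ : ∀ t ∈ Set.Icc (0 : ℝ) r,
      HasDerivAt k₂ ((π * min (d (k₁ t)) (s (k₂ t)) - g₂) / L₂) t)
    (h0 : 0 ≤ k₁ 0) :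
    ∀ t ∈ Set.Icc (0 : ℝ) r, 0 ≤ k₁ t := by
  have hρc_pos : 0 < ρc := by
    rw [hρc]
    positivity
  -- d ρ ≤ V₀ * ρ for all ρ
  have hdle : ∀ ρ : ℝ, d ρ ≤ V₀ * ρ := by
    intro ρ
    rw [hd, hQ]
    rw [if_pos (min_le_right ρ ρc)]
    exact mul_le_mul_of_nonneg_left (min_le_left ρ ρc) hV.le
  set F : ℝ → ℝ := fun t => (f₁ - π * min (d (k₁ t)) (s (k₂ t))) / L₁ with hF
  have key : ∀ t ∈ Set.Icc (0 : ℝ) r, -F t ≤ (-(π * V₀ / L₁)) * (-(k₁ t)) + 0 := by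
    intro t ht
    have h1 : min (d (k₁ t)) (s (k₂ t)) ≤ V₀ * k₁ t :=
      le_trans (min_le_left _ _) (hdle _)
    have h2 : π * min (d (k₁ t)) (s (k₂ t)) ≤ π * (V₀ * k₁ t) :=
      mul_le_mul_of_nonneg_left h1 hπ₀
    have h3 : -(f₁ - π * min (d (k₁ t)) (s (k₂ t))) ≤ π * V₀ * k₁ t := by
      nlinarith
    rw [hF, add_zero]
    calc -((f₁ - π * min (d (k₁ t)) (s (k₂ t))) / L₁)
        = (-(f₁ - π * min (d (k₁ t)) (s (k₂ t)))) / L₁ := by ring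
      _ ≤ (π * V₀ * k₁ t) / L₁ := by gcongr
      _ = (-(π * V₀ / L₁)) * (-(k₁ t)) := by ring
  have hcont : ContinuousOn (fun t => -(k₁ t)) (Set.Icc 0 r) := by
    intro t ht
    exact ((hk₁ t ht).continuousAt.continuousWithinAt).neg
  have hbound := le_gronwallBound_of_liminf_deriv_right_le
    (f := fun t => -(k₁ t)) (f' := fun t => -F t) (δ := 0) (K := -(π * V₀ / L₁))
    (ε := 0) (a := 0) (b := r) hcont
    (fun x hx r' hr' => by
      have hder : HasDerivWithinAt (fun t => -(k₁ t)) (-F x) (Set.Ici x) x :=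
        ((hk₁ x (Set.mem_Icc_of_Ico hx)).hasDerivWithinAt).neg
      exact hder.liminf_right_slope_le hr')
    (by simpa using neg_nonpos.mpr h0)
    (fun x hx => key x (Set.mem_Icc_of_Ico hx))
  intro t ht
  have := hbound t ht
  rw [gronwallBound_ε0_δ0] at this
  simpa using this
end

section
/- The jam density is an invariant upper bound for the downstream density in the linear-union model: fix V₀, T, l, L₁, L₂ > 0, a constant inflow f₁ ∈ ℝ, a constant outflow g₂ ≥ 0, and π ∈ [0, 1]. Suppose k₁, k₂ : [0, r] → ℝ are differentiable and satisfy k₁'(t) = (f₁ − π·min(d(k₁(t)), s(k₂(t))))/L₁ and k₂'(t) = (π·min(d(k₁(t)), s(k₂(t))) − g₂)/L₂ on [0, r], with k₂(0) ≤ 1/l. Then k₂(t) ≤ 1/l for all t ∈ [0, r]. -/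
/-- the jam density `1/l` is an invariant upper bound for the
downstream density in the linear-union model: if `g₂ ≥ 0`, `π ∈ [0,1]` and
`k₂(0) ≤ 1/l`, then `k₂(t) ≤ 1/l` for all `t ∈ [0, r]`. -/
theorem linear_union_jam_density_invariant
    (V₀ T l L₁ L₂ : ℝ) (hV : 0 < V₀) (hT : 0 < T) (hl : 0 < l)
    (hL₁ : 0 < L₁) (hL₂ : 0 < L₂)
    (f₁ g₂ π : ℝ) (hg₂ : 0 ≤ g₂) (hπ₀ : 0 ≤ π) (hπ₁ : π ≤ 1)
    (ρc : ℝ) (hρc : ρc = 1 / (V₀ * T + l))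
    (Q : ℝ → ℝ)
    (hQ : ∀ ρ, Q ρ = if ρ ≤ ρc then V₀ * ρ else (1 / T) * (1 - ρ * l))
    (d s : ℝ → ℝ)
    (hd : ∀ ρ, d ρ = Q (min ρ ρc))
    (hs : ∀ ρ, s ρ = Q (max ρ ρc))
    (r : ℝ)
    (k₁ k₂ : ℝ → ℝ)
    (hk₁ : ∀ t ∈ Set.Icc (0 : ℝ) r,
      HasDerivAt k₁ ((f₁ - π * min (d (k₁ t)) (s (k₂ t))) / L₁) t)
    (hk₂ : ∀ t ∈ Set.Icc (0 : ℝ) r,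
      HasDerivAt k₂ ((π * min (d (k₁ t)) (s (k₂ t)) - g₂) / L₂) t)
    (h0 : k₂ 0 ≤ 1 / l) :
    ∀ t ∈ Set.Icc (0 : ℝ) r, k₂ t ≤ 1 / l := by
  have hρcl : ρc < 1 / l := by
    rw [hρc]
    apply one_div_lt_one_div_of_lt hl
    nlinarith [mul_pos hV hT]
  -- the derivative of k₂ is nonpositive whenever k₂ x ≥ 1/l
  have key : ∀ x, 1 / l ≤ k₂ x →
      (π * min (d (k₁ x)) (s (k₂ x)) - g₂) / L₂ ≤ 0 := by
    intro x hk2x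
    have hρk : ρc < k₂ x := lt_of_lt_of_le hρcl hk2x
    have hs0 : s (k₂ x) ≤ 0 := by
      rw [hs, max_eq_left hρk.le, hQ, if_neg (not_le.2 hρk)]
      have h1 : 1 ≤ k₂ x * l := by
        rw [div_le_iff₀ hl] at hk2x
        linarith
      have hT' : (0 : ℝ) < 1 / T := by positivity
      nlinarith
    have hmin : min (d (k₁ x)) (s (k₂ x)) ≤ 0 :=
      le_trans (min_le_right _ _) hs0
    have hnum : π * min (d (k₁ x)) (s (k₂ x)) - g₂ ≤ 0 := by
      have := mul_nonpos_of_nonneg_of_nonpos hπ₀ hmin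
      linarith
    exact div_nonpos_of_nonpos_of_nonneg hnum hL₂.le
  have cont : ContinuousOn k₂ (Set.Icc 0 r) := fun x hx =>
    (hk₂ x hx).continuousAt.continuousWithinAt
  have hderiv : ∀ x ∈ Set.Ico (0 : ℝ) r,
      HasDerivWithinAt k₂ ((π * min (d (k₁ x)) (s (k₂ x)) - g₂) / L₂) (Set.Ici x) x :=
    fun x hx => (hk₂ x (Set.Ico_subset_Icc_self hx)).hasDerivWithinAt
  have main : ∀ ε > (0 : ℝ), ∀ x ∈ Set.Icc (0 : ℝ) r, k₂ x ≤ 1 / l + ε * x := by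
    intro ε hε
    have hB : ∀ x : ℝ, HasDerivAt (fun y => 1 / l + ε * y) ε x := by
      intro x
      simpa using ((hasDerivAt_id x).const_mul ε).const_add (1 / l)
    refine image_le_of_deriv_right_lt_deriv_boundary cont hderiv ?_ hB ?_
    · simpa using h0
    · intro x hx heq
      have hk2x : 1 / l ≤ k₂ x := by
        rw [heq]
        nlinarith [hx.1]
      exact lt_of_le_of_lt (key x hk2x) hε
  intro t ht
  have ht0 : 0 ≤ t := ht.1
  refine le_of_forall_pos_le_add ?_
  intro ε hε
  have h := main (ε / (t + 1)) (div_pos hε (by linarith)) t ht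
  have : ε / (t + 1) * t ≤ ε := by
    rw [div_mul_eq_mul_div, div_le_iff₀ (by linarith)]
    nlinarith
  linarith
end
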